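/- Let $L$ be the Laplacian of a weighted graph on vertex set $V$ (a real symmetric PSD matrix with $x^T L x = \sum_{u<v} C_{uv}(x_u - x_v)^2$ for nonnegative weights $C_{uv}$). Let $S_1, \ldots, S_r$ be $r$ pairwise disjoint nonempty subsets of $V$. Then $\max_{i \in [r]} \frac{\mathbf{1}_{S_i}^T L \mathbf{1}_{S_i}}{|S_i|} \ge \frac{\lambda_r(L)}{2}$, where $\lambda_r(L)$ is the $r$-th smallest eigenvalue of $L$ and $\mathbf{1}_{S_i}$ is the 0/1 indicator vector of $S_i$. -/

import Mathlib

open Matrix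

private lemma aux_dot_sum {V : Type*} [Fintype V] {r : ℕ} (b : V → ℝ) (c : Fin r → ℝ)
    (f : Fin r → V → ℝ) :
    b ⬝ᵥ (fun v => ∑ i, c i * f i v) = ∑ i, c i * (b ⬝ᵥ f i) := by
  simp only [dotProduct, Finset.mul_sum]
  rw [Finset.sum_comm]
  exact Finset.sum_congr rfl fun i _ => Finset.sum_congr rfl fun v _ => by ring

private lemma aux_mulVec_sum {V : Type*} [Fintype V] (L : Matrix V V ℝ) (g : V → V → ℝ) :
    L *ᵥ (fun u => ∑ v : V, g v u) = fun u => ∑ v : V, (L *ᵥ (g v)) u := by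
  funext u
  simp only [mulVec, dotProduct, Finset.mul_sum]
  rw [Finset.sum_comm]

private lemma aux_dot_expand {V : Type*} [Fintype V] (h : V → ℝ) (g : V → V → ℝ) :
    (∑ u : V, h u * ∑ v : V, g v u) = ∑ v : V, ∑ u : V, h u * g v u := by
  simp only [Finset.mul_sum]
  rw [Finset.sum_comm]

/-- For a graph Laplacian `L` (symmetric, quadratic form
`xᵀLx = (1/2)∑∑ C u v (x u - x v)²` with `C` nonnegative symmetric) and
`r` pairwise disjoint nonempty subsets `S i`, some `S i` satisfies
`1_{S i}ᵀ L 1_{S i} / |S i| ≥ λ_r(L) / 2`, where `λ_r` is the `r`-th smallest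
eigenvalue (given by a monotone enumeration `lam` of the eigenvalues). -/
theorem stmt4 {V : Type*} [Fintype V] [DecidableEq V]
    (L : Matrix V V ℝ) (hL : L.IsHermitian)
    (C : V → V → ℝ) (hC : ∀ u v, 0 ≤ C u v) (hCsymm : ∀ u v, C u v = C v u)
    (hform : ∀ x : V → ℝ,
      x ⬝ᵥ L.mulVec x = (1 / 2) * ∑ u : V, ∑ v : V, C u v * (x u - x v) ^ 2)
    (lam : Fin (Fintype.card V) → ℝ) (hlm : Monotone lam)
    (hle : ∃ e : Fin (Fintype.card V) ≃ V, lam = hL.eigenvalues ∘ e)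
    (r : ℕ) (hr : 0 < r) (hrn : r ≤ Fintype.card V)
    (S : Fin r → Finset V) (hne : ∀ i, (S i).Nonempty)
    (hdisj : ∀ i j, i ≠ j → Disjoint (S i) (S j)) :
    ∃ i : Fin r,
      lam ⟨r - 1, by omega⟩ / 2
        ≤ ((fun v => if v ∈ S i then (1 : ℝ) else 0) ⬝ᵥ
            L.mulVec (fun v => if v ∈ S i then (1 : ℝ) else 0)) / (S i).card := by
  classical
  by_contra hcon
  push_neg at hcon
  obtain ⟨e, he⟩ := hle
  set lr : ℝ := lam ⟨r - 1, by omega⟩ with hlr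
  set f : Fin r → V → ℝ := fun i v => if v ∈ S i then (1 : ℝ) else 0 with hf
  set Q : Fin r → ℝ := fun i => f i ⬝ᵥ L.mulVec (f i) with hQdef
  -- each vertex is in at most one S i
  have huniq : ∀ (u : V) (i j : Fin r), u ∈ S i → u ∈ S j → i = j := by
    intro u i j hi hj
    by_contra hij
    exact Finset.disjoint_left.mp (hdisj i j hij) hi hj
  have hQ : ∀ i, Q i < lr / 2 * (S i).card := by
    intro i
    have hcard : (0 : ℝ) < (S i).card := by
      exact_mod_cast (hne i).card_pos
    have h1 := hcon i
    rw [div_lt_div_iff₀ hcard (by norm_num : (0:ℝ) < 2)] at h1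
    calc Q i < lr * (S i).card / 2 := by
          have : Q i * 2 < lr * (S i).card := h1
          linarith
      _ = lr / 2 * (S i).card := by ring
  -- the eigenvector basis
  set B := hL.eigenvectorBasis with hB
  -- inner product = dot product
  have hinner : ∀ x y : EuclideanSpace ℝ V, (inner ℝ x y : ℝ) = (fun v => x v) ⬝ᵥ (fun v => y v) := by
    intro x y
    simp [PiLp.inner_apply, RCLike.inner_apply, dotProduct, conj_trivial]
    exact Finset.sum_congr rfl fun _ _ => mul_comm _ _
  -- constraint matrix
  set M : Matrix (Fin (r - 1)) (Fin r) ℝ :=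
    fun k i => (fun v => B (e ⟨k.val, by omega⟩) v) ⬝ᵥ f i with hM
  have hker : LinearMap.ker M.mulVecLin ≠ ⊥ := by
    apply LinearMap.ker_ne_bot_of_finrank_lt
    simp only [Module.finrank_pi, Fintype.card_fin]
    omega
  obtain ⟨c, hc0, hcne⟩ : ∃ c : Fin r → ℝ, M *ᵥ c = 0 ∧ c ≠ 0 := by
    rw [Submodule.ne_bot_iff] at hker
    obtain ⟨c, hc, hcne⟩ := hker
    exact ⟨c, hc, hcne⟩
  set h : V → ℝ := fun v => ∑ i, c i * f i v with hh
  set d : V → ℝ := fun v => (fun w => B v w) ⬝ᵥ h with hd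
  -- orthogonality against the first r-1 eigenvectors
  have hortho : ∀ j : Fin (Fintype.card V), j.val < r - 1 → d (e j) = 0 := by
    intro j hj
    have h0 : (M *ᵥ c) ⟨j.val, hj⟩ = 0 := by rw [hc0]; rfl
    rw [← h0]
    rw [hd]
    show (fun w => B (e j) w) ⬝ᵥ h = _
    rw [hh, aux_dot_sum]
    show _ = ∑ i, M ⟨j.val, hj⟩ i * c i
    exact Finset.sum_congr rfl fun i _ => mul_comm _ _
  -- representation of h in eigenbasis
  have hrepr : ∀ u : V, h u = ∑ v : V, d v * B v u := by
    intro u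
    have h2 : ∑ v : V, (inner ℝ (B v) (WithLp.toLp 2 h : EuclideanSpace ℝ V) : ℝ) • B v
        = (WithLp.toLp 2 h : EuclideanSpace ℝ V) := B.sum_repr' _
    have h3 := congrArg (WithLp.linearEquiv 2 ℝ (V → ℝ)) h2
    rw [map_sum] at h3
    simp only [_root_.map_smul] at h3
    have h4 := congrFun h3 u
    rw [Finset.sum_apply] at h4
    rw [show (WithLp.linearEquiv 2 ℝ (V → ℝ)) (WithLp.toLp 2 h : EuclideanSpace ℝ V) u = h u
      from rfl] at h4
    rw [← h4]
    refine Finset.sum_congr rfl fun v _ => ?_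
    rw [show ((inner ℝ (B v) (WithLp.toLp 2 h : EuclideanSpace ℝ V) : ℝ)
        • (WithLp.linearEquiv 2 ℝ (V → ℝ)) (B v)) u
      = (inner ℝ (B v) (WithLp.toLp 2 h : EuclideanSpace ℝ V) : ℝ) * B v u from rfl]
    congr 1
    exact hinner _ _
  -- L *ᵥ h in spectral form
  have hLh : L *ᵥ h = fun u => ∑ v : V, d v * (hL.eigenvalues v * B v u) := by
    have hrw : h = fun u => ∑ v : V, (fun w_ => d v * B v w_) u := funext hrepr
    rw [hrw, aux_mulVec_sum]
    funext u
    refine Finset.sum_congr rfl fun v _ => ?_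
    have : L *ᵥ (fun w_ => d v * B v w_) = fun w_ => d v * (L *ᵥ (fun z => B v z)) w_ := by
      rw [show (fun w_ => d v * B v w_) = d v • (fun z => B v z) from rfl]
      rw [mulVec_smul]
      rfl
    rw [this]
    have h5 : L *ᵥ (fun z => B v z) = fun z => hL.eigenvalues v * B v z := by
      have := hL.mulVec_eigenvectorBasis v
      rw [show (⇑(hL.eigenvectorBasis v) : V → ℝ) = fun z => B v z from rfl] at this
      rw [this]
      rfl
    rw [h5]
  have hquad : h ⬝ᵥ L *ᵥ h = ∑ v : V, hL.eigenvalues v * d v ^ 2 := by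
    rw [hLh]
    show (∑ u : V, h u * ∑ v : V, (fun v u => d v * (hL.eigenvalues v * B v u)) v u) = _
    rw [aux_dot_expand]
    refine Finset.sum_congr rfl fun v _ => ?_
    have : ∑ u : V, h u * (d v * (hL.eigenvalues v * B v u))
        = d v * hL.eigenvalues v * ((fun w => B v w) ⬝ᵥ h) := by
      simp only [dotProduct, Finset.mul_sum]
      exact Finset.sum_congr rfl fun u _ => by ring
    rw [this]
    show d v * hL.eigenvalues v * d v = _
    ring
  have hnorm : h ⬝ᵥ h = ∑ v : V, d v ^ 2 := by
    show (∑ u : V, h u * h u) = _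
    conv_lhs =>
      rw [show (∑ u : V, h u * h u) = ∑ u : V, h u * ∑ v : V, (fun v u => d v * B v u) v u from
        Finset.sum_congr rfl fun u _ => by rw [← hrepr u]]
    rw [aux_dot_expand]
    refine Finset.sum_congr rfl fun v _ => ?_
    have : ∑ u : V, h u * (d v * B v u) = d v * ((fun w => B v w) ⬝ᵥ h) := by
      simp only [dotProduct, Finset.mul_sum]
      exact Finset.sum_congr rfl fun u _ => by ring
    rw [this]
    show d v * d v = _
    ring
  -- eigenvalue lower bound
  have heig : ∀ v : V, lr * d v ^ 2 ≤ hL.eigenvalues v * d v ^ 2 := by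
    intro v
    by_cases hdv : d v = 0
    · simp [hdv]
    · have hge : lr ≤ hL.eigenvalues v := by
        have hj : ¬ ((e.symm v).val < r - 1) := by
          intro hlt
          exact hdv (by simpa using hortho (e.symm v) hlt)
        have hmono := hlm (show (⟨r - 1, by omega⟩ : Fin (Fintype.card V)) ≤ e.symm v by
          rw [Fin.le_def]; simp only [Fin.val_mk]; omega)
        rw [hlr, he]
        rw [he] at hmono
        simpa using hmono
      nlinarith [sq_nonneg (d v)]
  have hlow : lr * (h ⬝ᵥ h) ≤ h ⬝ᵥ L *ᵥ h := by
    rw [hquad, hnorm, Finset.mul_sum]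
    exact Finset.sum_le_sum fun v _ => heig v
  -- pointwise: h u ^ 2 = ∑ i, c i ^ 2 * f i u
  have hsq : ∀ u : V, h u ^ 2 = ∑ i, c i ^ 2 * f i u := by
    intro u
    by_cases hu : ∃ i, u ∈ S i
    · obtain ⟨i0, hi0⟩ := hu
      have h1 : h u = c i0 := by
        rw [hh]
        show ∑ i, c i * f i u = c i0
        rw [Finset.sum_eq_single i0]
        · simp [hf, hi0]
        · intro j _ hj
          have : u ∉ S j := fun hmem => hj (huniq u j i0 hmem hi0)
          simp [hf, this]
        · simp
      have h2 : ∑ i, c i ^ 2 * f i u = c i0 ^ 2 := by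
        rw [Finset.sum_eq_single i0]
        · simp [hf, hi0]
        · intro j _ hj
          have : u ∉ S j := fun hmem => hj (huniq u j i0 hmem hi0)
          simp [hf, this]
        · simp
      rw [h1, h2]
    · push_neg at hu
      have h1 : h u = 0 := by
        rw [hh]
        show ∑ i, c i * f i u = 0
        exact Finset.sum_eq_zero fun j _ => by simp [hf, hu j]
      have h2 : ∑ i, c i ^ 2 * f i u = 0 :=
        Finset.sum_eq_zero fun j _ => by simp [hf, hu j]
      rw [h1, h2]
      norm_num
  have hnorm2 : h ⬝ᵥ h = ∑ i, c i ^ 2 * (S i).card := by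
    have h1 : h ⬝ᵥ h = ∑ u : V, h u ^ 2 :=
      Finset.sum_congr rfl fun u _ => by ring
    rw [h1]
    rw [show (∑ u : V, h u ^ 2) = ∑ u : V, ∑ i, c i ^ 2 * f i u from
      Finset.sum_congr rfl fun u _ => hsq u]
    rw [Finset.sum_comm]
    refine Finset.sum_congr rfl fun i _ => ?_
    rw [← Finset.mul_sum]
    congr 1
    simp [hf, Finset.sum_ite_mem]
  -- h ≠ 0 hence positive norm
  have hpos : 0 < h ⬝ᵥ h := by
    obtain ⟨i0, hi0⟩ := Function.ne_iff.mp hcne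
    obtain ⟨u, hu⟩ := hne i0
    have hhu : h u = c i0 := by
      rw [hh]
      show ∑ i, c i * f i u = c i0
      rw [Finset.sum_eq_single i0]
      · simp [hf, hu]
      · intro j _ hj
        have : u ∉ S j := fun hmem => hj (huniq u j i0 hmem hu)
        simp [hf, this]
      · simp
    have h1 : h ⬝ᵥ h = ∑ v : V, h v ^ 2 :=
      Finset.sum_congr rfl fun v _ => by ring
    rw [h1]
    refine Finset.sum_pos' (fun v _ => sq_nonneg _) ⟨u, Finset.mem_univ u, ?_⟩
    rw [hhu]
    exact lt_of_le_of_ne (sq_nonneg _) (Ne.symm (pow_ne_zero 2 (by simpa using hi0)))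
  -- key pointwise inequality
  have hkey : ∀ u v : V, (h u - h v) ^ 2 ≤ 2 * ∑ i, c i ^ 2 * (f i u - f i v) ^ 2 := by
    intro u v
    set a : Fin r → ℝ := fun i => c i * (f i u - f i v) with ha
    set T : Finset (Fin r) := Finset.univ.filter (fun i => f i u ≠ f i v) with hT
    have hsum : h u - h v = ∑ i ∈ T, a i := by
      rw [hh]
      show (∑ i, c i * f i u) - (∑ i, c i * f i v) = _
      rw [← Finset.sum_sub_distrib]
      rw [show ∑ i, (c i * f i u - c i * f i v) = ∑ i, a i from
        Finset.sum_congr rfl fun i _ => by rw [ha]; ring]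
      symm
      apply Finset.sum_subset (Finset.filter_subset _ _)
      intro i _ hi
      simp only [hT, Finset.mem_filter, Finset.mem_univ, true_and, not_not] at hi
      simp [ha, hi]
    have hTcard : T.card ≤ 2 := by
      have hsub : T ⊆ Finset.univ.filter (fun i => u ∈ S i) ∪
          Finset.univ.filter (fun i => v ∈ S i) := by
        intro i hi
        simp only [hT, Finset.mem_filter, Finset.mem_univ, true_and] at hi
        simp only [Finset.mem_union, Finset.mem_filter, Finset.mem_univ, true_and]
        by_contra hcon2
        push_neg at hcon2
        apply hi
        simp [hf, hcon2.1, hcon2.2]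
      have h1 : (Finset.univ.filter (fun i => u ∈ S i)).card ≤ 1 :=
        Finset.card_le_one.mpr fun i hi j hj =>
          huniq u i j (Finset.mem_filter.mp hi).2 (Finset.mem_filter.mp hj).2
      have h2 : (Finset.univ.filter (fun i => v ∈ S i)).card ≤ 1 :=
        Finset.card_le_one.mpr fun i hi j hj =>
          huniq v i j (Finset.mem_filter.mp hi).2 (Finset.mem_filter.mp hj).2
      calc T.card ≤ _ := Finset.card_le_card hsub
        _ ≤ _ := Finset.card_union_le _ _
        _ ≤ 2 := by omega
    calc (h u - h v) ^ 2 = (∑ i ∈ T, a i) ^ 2 := by rw [hsum]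
      _ ≤ T.card * ∑ i ∈ T, a i ^ 2 := sq_sum_le_card_mul_sum_sq
      _ ≤ 2 * ∑ i ∈ T, a i ^ 2 := by
          apply mul_le_mul_of_nonneg_right
          · exact_mod_cast hTcard
          · exact Finset.sum_nonneg fun i _ => sq_nonneg _
      _ ≤ 2 * ∑ i, a i ^ 2 := by
          apply mul_le_mul_of_nonneg_left _ (by norm_num)
          exact Finset.sum_le_sum_of_subset_of_nonneg (Finset.filter_subset _ _)
            (fun i _ _ => sq_nonneg _)
      _ = 2 * ∑ i, c i ^ 2 * (f i u - f i v) ^ 2 := by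
          congr 1
          exact Finset.sum_congr rfl fun i _ => by rw [ha]; ring
  -- upper bound on hᵀ L h
  have hup : h ⬝ᵥ L *ᵥ h ≤ 2 * ∑ i, c i ^ 2 * Q i := by
    rw [hform h]
    have step : ∑ u : V, ∑ v : V, C u v * (h u - h v) ^ 2
        ≤ ∑ u : V, ∑ v : V, C u v * (2 * ∑ i, c i ^ 2 * (f i u - f i v) ^ 2) :=
      Finset.sum_le_sum fun u _ => Finset.sum_le_sum fun v _ =>
        mul_le_mul_of_nonneg_left (hkey u v) (hC u v)
    have heq : (1/2 : ℝ) * ∑ u : V, ∑ v : V, C u v * (2 * ∑ i, c i ^ 2 * (f i u - f i v) ^ 2)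
        = 2 * ∑ i, c i ^ 2 * Q i := by
      have hQi : ∀ i, Q i = (1/2 : ℝ) * ∑ u : V, ∑ v : V, C u v * (f i u - f i v) ^ 2 :=
        fun i => hform (f i)
      rw [show (2 : ℝ) * ∑ i, c i ^ 2 * Q i
          = ∑ i, c i ^ 2 * ∑ u : V, ∑ v : V, C u v * (f i u - f i v) ^ 2 from by
        rw [Finset.mul_sum]
        refine Finset.sum_congr rfl fun i _ => ?_
        rw [hQi i]
        ring]
      rw [Finset.mul_sum]
      rw [show ∑ i, c i ^ 2 * ∑ u : V, ∑ v : V, C u v * (f i u - f i v) ^ 2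
          = ∑ u : V, ∑ i, c i ^ 2 * ∑ v : V, C u v * (f i u - f i v) ^ 2 from by
        rw [Finset.sum_comm]
        refine Finset.sum_congr rfl fun i _ => ?_
        rw [Finset.mul_sum]]
      refine Finset.sum_congr rfl fun u _ => ?_
      rw [show ∑ i, c i ^ 2 * ∑ v : V, C u v * (f i u - f i v) ^ 2
          = ∑ v : V, ∑ i, c i ^ 2 * (C u v * (f i u - f i v) ^ 2) from by
        rw [Finset.sum_comm]
        refine Finset.sum_congr rfl fun i _ => ?_
        rw [Finset.mul_sum]]
      rw [Finset.mul_sum]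
      refine Finset.sum_congr rfl fun v _ => ?_
      rw [show (1/2 : ℝ) * (C u v * (2 * ∑ i, c i ^ 2 * (f i u - f i v) ^ 2))
          = C u v * ∑ i, c i ^ 2 * (f i u - f i v) ^ 2 from by ring]
      rw [Finset.mul_sum]
      exact Finset.sum_congr rfl fun i _ => by ring
    calc (1/2 : ℝ) * ∑ u : V, ∑ v : V, C u v * (h u - h v) ^ 2
        ≤ (1/2 : ℝ) * ∑ u : V, ∑ v : V, C u v * (2 * ∑ i, c i ^ 2 * (f i u - f i v) ^ 2) :=
          mul_le_mul_of_nonneg_left step (by norm_num)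
      _ = 2 * ∑ i, c i ^ 2 * Q i := heq
  -- final contradiction
  have hstrict : 2 * ∑ i, c i ^ 2 * Q i < lr * (h ⬝ᵥ h) := by
    rw [hnorm2]
    have hlt : ∑ i, c i ^ 2 * Q i < ∑ i, c i ^ 2 * (lr / 2 * (S i).card) := by
      obtain ⟨i0, hi0⟩ := Function.ne_iff.mp hcne
      refine Finset.sum_lt_sum (fun i _ => mul_le_mul_of_nonneg_left (le_of_lt (hQ i))
        (sq_nonneg _)) ⟨i0, Finset.mem_univ i0, ?_⟩
      refine mul_lt_mul_of_pos_left (hQ i0) ?_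
      exact lt_of_le_of_ne (sq_nonneg _) (Ne.symm (pow_ne_zero 2 (by simpa using hi0)))
    have heq2 : 2 * ∑ i, c i ^ 2 * (lr / 2 * (S i).card)
        = lr * ∑ i, c i ^ 2 * (S i).card := by
      rw [Finset.mul_sum, Finset.mul_sum]
      exact Finset.sum_congr rfl fun i _ => by ring
    linarith
  linarith [hlow, hup, hstrict]
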